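/- Let R, Rc: R → SO(3) be differentiable curves with body angular velocities Ω, Ωc defined by Ṙ = R Ω̂ and Ṙc = Rc Ω̂c. Define e_R = (1/2)(Rc^T R - R^T Rc)^∨, e_Ω = Ω - R^T Rc Ωc, and Ψ(R,Rc) = (1/2) tr(I - Rc^T R). Then d/dt Ψ(R, Rc) = e_R · e_Ω. -/

import Mathlib

open Matrix
open scoped Matrix

attribute [local instance] Matrix.normedAddCommGroup Matrix.normedSpace

/-- The hat map sending `x ∈ ℝ³` to the skew-symmetric matrix `x̂` with `x̂ y = x × y`. -/
def hat (x : Fin 3 → ℝ) : Matrix (Fin 3) (Fin 3) ℝ :=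
  !![0, -x 2, x 1; x 2, 0, -x 0; -x 1, x 0, 0]

/-- The vee map, inverse of the hat map. -/
def vee (M : Matrix (Fin 3) (Fin 3) ℝ) : Fin 3 → ℝ := ![M 2 1, M 0 2, M 1 0]

lemma vee_hat (x : Fin 3 → ℝ) : vee (hat x) = x := by
  funext i; fin_cases i <;> simp [vee, hat]

lemma hat_vee_of_skew (M : Matrix (Fin 3) (Fin 3) ℝ) (h : Mᵀ = -M) :
    hat (vee M) = M := by
  have h' : ∀ i j, M j i = -M i j := fun i j => by
    have := congrFun (congrFun h i) j; simpa [Matrix.transpose_apply] using this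
  ext i j
  fin_cases i <;> fin_cases j <;>
    simp [hat, vee] <;>
    first
      | (have := h' 0 0; linarith)
      | (have := h' 1 1; linarith)
      | (have := h' 2 2; linarith)
      | (have := h' 0 1; linarith)
      | (have := h' 0 2; linarith)
      | (have := h' 1 2; linarith)

lemma conj_hat (A : Matrix (Fin 3) (Fin 3) ℝ) (x : Fin 3 → ℝ) :
    Aᵀ * hat (A.mulVec x) * A = A.det • hat x := by
  ext i j
  fin_cases i <;> fin_cases j <;>
    simp [hat, mul_apply, mulVec, dotProduct, Fin.sum_univ_three, det_fin_three] <;> ring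

lemma pairing1 (A B : Matrix (Fin 3) (Fin 3) ℝ) (x : Fin 3 → ℝ) :
    (∑ i : Fin 3, ∑ k : Fin 3, B k i * (A * hat x) k i)
      = -(x ⬝ᵥ vee (Bᵀ * A - (Bᵀ * A)ᵀ)) := by
  simp [hat, vee, mul_apply, Fin.sum_univ_three, dotProduct]
  ring

lemma pairing2 (A B : Matrix (Fin 3) (Fin 3) ℝ) (x : Fin 3 → ℝ) :
    (∑ i : Fin 3, ∑ k : Fin 3, (B * hat x) k i * A k i)
      = x ⬝ᵥ vee (Bᵀ * A - (Bᵀ * A)ᵀ) := by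
  simp [hat, vee, mul_apply, Fin.sum_univ_three, dotProduct]
  ring

/-- For differentiable curves `R, Rc` in `SO(3)` with `Ṙ = R Ω̂`, `Ṙc = Rc Ω̂c`,
the attitude error function `Ψ = (1/2) tr(I - RcᵀR)` satisfies `Ψ̇ = e_R ⋅ e_Ω`. -/
theorem stmt4 (R Rc : ℝ → Matrix (Fin 3) (Fin 3) ℝ) (Ω Ωc : ℝ → Fin 3 → ℝ) (t : ℝ)
    (hSO : ∀ s, (R s)ᵀ * R s = 1 ∧ (R s).det = 1)
    (hSOc : ∀ s, (Rc s)ᵀ * Rc s = 1 ∧ (Rc s).det = 1)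
    (hR : ∀ s, HasDerivAt R (R s * hat (Ω s)) s)
    (hRc : ∀ s, HasDerivAt Rc (Rc s * hat (Ωc s)) s) :
    let eR : Fin 3 → ℝ := (1 / 2 : ℝ) • vee ((Rc t)ᵀ * R t - (R t)ᵀ * Rc t)
    let eΩ : Fin 3 → ℝ := Ω t - ((R t)ᵀ * Rc t).mulVec (Ωc t)
    HasDerivAt (fun s => (1 / 2) * ((1 : Matrix (Fin 3) (Fin 3) ℝ) - (Rc s)ᵀ * R s).trace)
      (eR ⬝ᵥ eΩ) t := by
  intro eR eΩ
  set A := R t with hA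
  set B := Rc t with hB
  set Q : Matrix (Fin 3) (Fin 3) ℝ := Bᵀ * A with hQ
  set a : Fin 3 → ℝ := vee (Q - Qᵀ) with ha
  -- entrywise derivatives
  have entryR : ∀ i j : Fin 3, HasDerivAt (fun s => R s i j) ((A * hat (Ω t)) i j) t :=
    fun i j => hasDerivAt_pi.mp (hasDerivAt_pi.mp (hR t) i) j
  have entryRc : ∀ i j : Fin 3, HasDerivAt (fun s => Rc s i j) ((B * hat (Ωc t)) i j) t :=
    fun i j => hasDerivAt_pi.mp (hasDerivAt_pi.mp (hRc t) i) j
  -- the function in entry form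
  have hfun : (fun s => (1 / 2 : ℝ) * ((1 : Matrix (Fin 3) (Fin 3) ℝ) - (Rc s)ᵀ * R s).trace)
      = fun s => (1 / 2 : ℝ) *
        ((3 : ℝ) - ∑ i : Fin 3, ∑ k : Fin 3, Rc s k i * R s k i) := by
    funext s
    congr 1
    simp [Matrix.trace, Matrix.diag, Matrix.mul_apply, Fin.sum_univ_three]
  rw [hfun]
  have hD : HasDerivAt (fun s => (1 / 2 : ℝ) *
      ((3 : ℝ) - ∑ i : Fin 3, ∑ k : Fin 3, Rc s k i * R s k i))
      ((1 / 2 : ℝ) * (0 - ∑ i : Fin 3, ∑ k : Fin 3,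
        ((B * hat (Ωc t)) k i * A k i + B k i * (A * hat (Ω t)) k i))) t := by
    refine HasDerivAt.const_mul _ ?_
    refine (hasDerivAt_const t (3 : ℝ)).sub ?_
    refine HasDerivAt.fun_sum fun i _ => HasDerivAt.fun_sum fun k _ => ?_
    exact (entryRc k i).mul (entryR k i)
  convert hD using 1
  -- now the algebraic identity
  have hAo := (hSO t).1
  have hBo := (hSOc t).1
  have hAd := (hSO t).2
  have hBd := (hSOc t).2
  have hQo : Qᵀ * Q = 1 := by
    have hBB : B * Bᵀ = 1 := mul_eq_one_comm.mp hBo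
    calc Qᵀ * Q = Aᵀ * (B * Bᵀ) * A := by
          simp [hQ, Matrix.transpose_mul, Matrix.mul_assoc]
      _ = 1 := by rw [hBB]; simpa using hAo
  have hQQ : Q * Qᵀ = 1 := mul_eq_one_comm.mp hQo
  have hQd : Q.det = 1 := by
    simp [hQ, hA, hB, Matrix.det_mul, Matrix.det_transpose, hAd, hBd]
  have hskew : (Q - Qᵀ)ᵀ = -(Q - Qᵀ) := by
    rw [Matrix.transpose_sub, Matrix.transpose_transpose, neg_sub]
  have hhat : hat a = Q - Qᵀ := hat_vee_of_skew _ hskew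
  -- key fact : Q a = a
  have hQa : Q.mulVec a = a := by
    have h1 := conj_hat Q a
    have h2 : hat (Q.mulVec a) = Q * (Q.det • hat a) * Qᵀ := by
      rw [← h1]
      rw [show Q * (Qᵀ * hat (Q.mulVec a) * Q) * Qᵀ
            = (Q * Qᵀ) * hat (Q.mulVec a) * (Q * Qᵀ) by
        simp [Matrix.mul_assoc]]
      simp [hQQ]
    have h3 : hat (Q.mulVec a) = hat a := by
      rw [h2, hQd, one_smul, hhat]
      calc Q * (Q - Qᵀ) * Qᵀ = Q * Q * Qᵀ - Q * Qᵀ * Qᵀ := by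
            rw [Matrix.mul_sub, Matrix.sub_mul]
        _ = Q * (Q * Qᵀ) - Q * Qᵀ * Qᵀ := by rw [Matrix.mul_assoc]
        _ = Q - Qᵀ := by rw [hQQ, mul_one, one_mul]
    have := congrArg vee h3
    rwa [vee_hat, vee_hat] at this
  -- compute both sides
  have hS1 := pairing2 A B (Ωc t)
  have hS2 := pairing1 A B (Ω t)
  rw [← hQ] at hS1 hS2
  have hsum : (∑ i : Fin 3, ∑ k : Fin 3,
      ((B * hat (Ωc t)) k i * A k i + B k i * (A * hat (Ω t)) k i))
      = (Ωc t ⬝ᵥ a) - (Ω t ⬝ᵥ a) := by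
    simp only [Finset.sum_add_distrib]
    rw [hS1, hS2, ← ha]
    ring
  have heΩ : eΩ = Ω t - Qᵀ.mulVec (Ωc t) := by
    simp only [eΩ, hQ, hA, hB, Matrix.transpose_mul, Matrix.transpose_transpose]
  have heR : eR = (1 / 2 : ℝ) • a := by
    simp only [eR, ha, hQ, hA, hB, Matrix.transpose_mul, Matrix.transpose_transpose]
  rw [heR, heΩ, hsum]
  have hdot : a ⬝ᵥ Qᵀ.mulVec (Ωc t) = a ⬝ᵥ Ωc t := by
    rw [Matrix.dotProduct_mulVec, Matrix.vecMul_transpose, hQa]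
  rw [smul_dotProduct, dotProduct_sub, hdot]
  rw [dotProduct_comm a (Ω t), dotProduct_comm a (Ωc t)]
  simp only [smul_eq_mul]
  ring
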